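/- Fix an integer N ≥ 2, a real p with 0 < p < 1, q = 1 − p, a strategy S, and a real t with 0 ≤ t < 1. Then there exists exactly one function L : {0,…,N} → ℝ satisfying L(0) = 1, L(N) = 1, and L(i) = t·(q·L(i − S(i)) + p·L(i + S(i))) for all 1 ≤ i ≤ N − 1. -/

import Mathlib

/-- Existence and uniqueness of the solution of the probability-generating-
function system for the duration of the game under a stationary strategy `S`,
evaluated at `0 ≤ t < 1`: `L 0 = 1`, `L N = 1`, and
`L i = t·(q·L(i - S i) + p·L(i + S i))` for `1 ≤ i ≤ N - 1`. -/
theorem duration_pgf_system_exists_unique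
    (N : ℕ) (hN : 2 ≤ N) (p q : ℝ)
    (hp0 : 0 < p) (hp1 : p < 1) (hq : q = 1 - p)
    (S : ℕ → ℕ)
    (hS : ∀ i : ℕ, 1 ≤ i → i ≤ N - 1 → 1 ≤ S i ∧ S i ≤ min i (N - i))
    (t : ℝ) (ht0 : 0 ≤ t) (ht1 : t < 1) :
    (∃ L : ℕ → ℝ, L 0 = 1 ∧ L N = 1 ∧
        ∀ i : ℕ, 1 ≤ i → i ≤ N - 1 →
          L i = t * (q * L (i - S i) + p * L (i + S i))) ∧
    (∀ L₁ L₂ : ℕ → ℝ,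
        (L₁ 0 = 1 ∧ L₁ N = 1 ∧
          ∀ i : ℕ, 1 ≤ i → i ≤ N - 1 →
            L₁ i = t * (q * L₁ (i - S i) + p * L₁ (i + S i))) →
        (L₂ 0 = 1 ∧ L₂ N = 1 ∧
          ∀ i : ℕ, 1 ≤ i → i ≤ N - 1 →
            L₂ i = t * (q * L₂ (i - S i) + p * L₂ (i + S i))) →
        ∀ i : ℕ, i ≤ N → L₁ i = L₂ i) := by
  have hq0 : 0 < q := by rw [hq]; linarith
  constructor
  · -- Existence via Banach fixed point
    set f : (Fin (N + 1) → ℝ) → (Fin (N + 1) → ℝ) := fun L i =>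
      if h : 1 ≤ (i : ℕ) ∧ (i : ℕ) ≤ N - 1 then
        t * (q * L ⟨(i : ℕ) - S i, by have := i.isLt; omega⟩ +
             p * L ⟨(i : ℕ) + S i, by
                have h2 := (hS i h.1 h.2).2; have := i.isLt; omega⟩)
      else 1 with hf
    have hK : (⟨t, ht0⟩ : NNReal) < 1 := by
      exact (NNReal.coe_lt_coe (r₁ := ⟨t, ht0⟩) (r₂ := 1)).mp ht1
    have hlip : LipschitzWith ⟨t, ht0⟩ f := by
      apply LipschitzWith.of_dist_le_mul
      intro x y
      show dist (f x) (f y) ≤ t * dist x y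
      have hd : (0 : ℝ) ≤ t * dist x y :=
        mul_nonneg ht0 dist_nonneg
      rw [dist_pi_le_iff hd]
      intro i
      by_cases h : 1 ≤ (i : ℕ) ∧ (i : ℕ) ≤ N - 1
      · simp only [hf, dif_pos h]
        rw [Real.dist_eq]
        set a : Fin (N + 1) := ⟨(i : ℕ) - S i, by have := i.isLt; omega⟩
        set b : Fin (N + 1) := ⟨(i : ℕ) + S i, by
          have h2 := (hS i h.1 h.2).2; have := i.isLt; omega⟩
        have ha : |x a - y a| ≤ dist x y := by
          rw [← Real.dist_eq]; exact dist_le_pi_dist x y a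
        have hb : |x b - y b| ≤ dist x y := by
          rw [← Real.dist_eq]; exact dist_le_pi_dist x y b
        have : t * (q * x a + p * x b) - t * (q * y a + p * y b)
            = t * (q * (x a - y a) + p * (x b - y b)) := by ring
        rw [this, abs_mul, abs_of_nonneg ht0]
        have hsum : |q * (x a - y a) + p * (x b - y b)| ≤ dist x y := by
          calc |q * (x a - y a) + p * (x b - y b)|
              ≤ |q * (x a - y a)| + |p * (x b - y b)| := abs_add_le _ _
            _ = q * |x a - y a| + p * |x b - y b| := by
                rw [abs_mul, abs_mul, abs_of_pos hq0, abs_of_pos hp0]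
            _ ≤ q * dist x y + p * dist x y := by
                gcongr
            _ = dist x y := by rw [hq]; ring
        exact mul_le_mul_of_nonneg_left hsum ht0
      · simp only [hf, dif_neg h]
        simpa using hd
    have hcontr : ContractingWith ⟨t, ht0⟩ f := ⟨hK, hlip⟩
    set L₀ := hcontr.fixedPoint f with hL₀
    have hfix : f L₀ = L₀ := hcontr.fixedPoint_isFixedPt
    set Lf : ℕ → ℝ := fun n =>
      if h : n ≤ N then L₀ ⟨n, Nat.lt_succ_of_le h⟩ else 0 with hLf
    refine ⟨Lf, ?_, ?_, ?_⟩
    · have h0 : (0 : ℕ) ≤ N := Nat.zero_le N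
      simp only [hLf]
      rw [dif_pos h0, ← hfix]
      simp only [hf]
      rw [dif_neg]; omega
    · have h0 : N ≤ N := le_refl N
      simp only [hLf]
      rw [dif_pos h0, ← hfix]
      simp only [hf]
      rw [dif_neg]; omega
    · intro i hi1 hi2
      have hiN : i ≤ N := by omega
      have hSi := hS i hi1 hi2
      have hsub : i - S i ≤ N := by omega
      have hadd : i + S i ≤ N := by omega
      simp only [hLf]
      rw [dif_pos hiN, dif_pos hsub, dif_pos hadd]
      conv_lhs => rw [← hfix]
      simp only [hf]
      rw [dif_pos ⟨hi1, hi2⟩]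
  · -- Uniqueness via maximum principle
    rintro L₁ L₂ ⟨h10, h1N, h1rec⟩ ⟨h20, h2N, h2rec⟩
    set D : ℕ → ℝ := fun i => |L₁ i - L₂ i| with hD
    have hne : (Finset.range (N + 1)).Nonempty := ⟨0, by simp⟩
    set M := (Finset.range (N + 1)).sup' hne D with hM
    have hle : ∀ j, j ≤ N → D j ≤ M := fun j hj =>
      Finset.le_sup' D (Finset.mem_range.mpr (Nat.lt_succ_of_le hj))
    have hM0 : M = 0 := by
      obtain ⟨i0, hi0mem, hi0⟩ := Finset.exists_mem_eq_sup' hne D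
      have hi0N : i0 ≤ N := Nat.lt_succ_iff.mp (Finset.mem_range.mp hi0mem)
      by_cases hb : 1 ≤ i0 ∧ i0 ≤ N - 1
      · -- interior maximum
        have hSi := hS i0 hb.1 hb.2
        have hsub : i0 - S i0 ≤ N := by omega
        have hadd : i0 + S i0 ≤ N := by omega
        have hrec : D i0 ≤ t * M := by
          have e1 := h1rec i0 hb.1 hb.2
          have e2 := h2rec i0 hb.1 hb.2
          have : L₁ i0 - L₂ i0 = t * (q * (L₁ (i0 - S i0) - L₂ (i0 - S i0))
              + p * (L₁ (i0 + S i0) - L₂ (i0 + S i0))) := by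
            rw [e1, e2]; ring
          simp only [hD]
          rw [this, abs_mul, abs_of_nonneg ht0]
          apply mul_le_mul_of_nonneg_left _ ht0
          calc |q * (L₁ (i0 - S i0) - L₂ (i0 - S i0))
              + p * (L₁ (i0 + S i0) - L₂ (i0 + S i0))|
              ≤ |q * (L₁ (i0 - S i0) - L₂ (i0 - S i0))|
                + |p * (L₁ (i0 + S i0) - L₂ (i0 + S i0))| := abs_add_le _ _
            _ = q * D (i0 - S i0) + p * D (i0 + S i0) := by
                simp only [hD]
                rw [abs_mul, abs_mul, abs_of_pos hq0, abs_of_pos hp0]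
            _ ≤ q * M + p * M := by
                gcongr
                · exact hle _ hsub
                · exact hle _ hadd
            _ = M := by rw [hq]; ring
        have hMle : M ≤ t * M := by
          calc M = D i0 := hM.trans hi0
            _ ≤ t * M := hrec
        have hMnn : 0 ≤ M := le_trans (abs_nonneg _) (hle 0 (Nat.zero_le N))
        nlinarith
      · -- boundary maximum
        have hDi0 : D i0 = 0 := by
          rcases Nat.lt_or_ge i0 1 with h | h
          · have : i0 = 0 := by omega
            simp [hD, this, h10, h20]
          · have : i0 = N := by omega
            simp [hD, this, h1N, h2N]
        rw [hM, hi0, hDi0]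
    intro i hiN
    have := hle i hiN
    rw [hM0] at this
    have := abs_nonneg (L₁ i - L₂ i)
    have habs : |L₁ i - L₂ i| = 0 := le_antisymm (hle i hiN |>.trans hM0.le) (abs_nonneg _)
    have := abs_eq_zero.mp habs
    linarith
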